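/- Let X : S¹ × (0,T) → ℝ² be a smooth solution of the flow ∂X/∂t = (h(t) − κ)ν through embedded closed curves, and set θ(p,q,t) = ∫_p^q κ ds_t. Then θ satisfies the two-point heat equation ∂θ/∂t(p,q,t) = ∂²θ/∂s_q²(p,q,t) + ∂²θ/∂s_p²(p,q,t) (equivalently, ∂θ/∂t = ∂κ/∂s(q,t) − ∂κ/∂s(p,t)) for all p, q ∈ S¹ with p ≠ q and all t ∈ (0,T). -/

import Mathlib

open Real Set MeasureTheory

noncomputable section

/-- The Euclidean plane. -/
abbrev E2 : Type := EuclideanSpace ℝ (Fin 2)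

/-- Rotation by minus 90 degrees: `(a, b) ↦ (b, -a)`. -/
def rot90 (u : E2) : E2 := WithLp.toLp 2 ![u 1, -u 0]

/-- Length element `v(p) = ‖∂X/∂p‖`. -/
def lenElem (X : ℝ → E2) (p : ℝ) : ℝ := ‖deriv X p‖

/-- Unit tangent vector `τ = v⁻¹ ∂X/∂p`. -/
def tvec (X : ℝ → E2) (p : ℝ) : E2 := (lenElem X p)⁻¹ • deriv X p

/-- Outward unit normal `ν = (τ₂, -τ₁)`. -/
def nvec (X : ℝ → E2) (p : ℝ) : E2 := rot90 (tvec X p)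

/-- Curvature `κ = -⟨∂τ/∂s, ν⟩`, where `∂/∂s = v⁻¹ ∂/∂p` is the arc-length derivative. -/
def curv (X : ℝ → E2) (p : ℝ) : ℝ :=
  -(inner ℝ ((lenElem X p)⁻¹ • deriv (tvec X) p) (nvec X p) : ℝ)

/-- Curvature vector `κ⃗ = -κ ν`. -/
def kvec (X : ℝ → E2) (p : ℝ) : E2 := (-(curv X p)) • nvec X p

/-- Local total curvature `θ(p,q) = ∫_p^q κ ds`. -/
def theta (X : ℝ → E2) (p q : ℝ) : ℝ := ∫ r in p..q, curv X r * lenElem X r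

/-- Intrinsic (arc-length) distance `l(p,q) = ∫_p^q ds`. -/
def arcl (X : ℝ → E2) (p q : ℝ) : ℝ := ∫ r in p..q, lenElem X r

/-- `∫_p^q κ² ds`. -/
def sqCurvInt (X : ℝ → E2) (p q : ℝ) : ℝ := ∫ r in p..q, (curv X r)^2 * lenElem X r

/-- Total length `L` of the (1-periodic) curve. -/
def clen (X : ℝ → E2) : ℝ := arcl X 0 1

/-- Extrinsic distance `d(p,q) = ‖X(q) - X(p)‖`. -/
def extd (X : ℝ → E2) (p q : ℝ) : ℝ := ‖X q - X p‖

/-- The unit vector `w = (X(q) - X(p))/d(p,q)`. -/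
def wvec (X : ℝ → E2) (p q : ℝ) : E2 := (extd X p q)⁻¹ • (X q - X p)

/-- `ψ(p,q) = (L/π) sin(π l(p,q)/L)`. -/
def psi (X : ℝ → E2) (p q : ℝ) : ℝ :=
  (clen X / π) * Real.sin (π * arcl X p q / clen X)

/-- A closed smooth regular curve, modelled as a 1-periodic map `ℝ → ℝ²`. -/
def IsClosedCurve (X : ℝ → E2) : Prop :=
  ContDiff ℝ (⊤ : ℕ∞) X ∧ Function.Periodic X 1 ∧ ∀ p, deriv X p ≠ 0

/-- Embeddedness: self-intersections only at parameters differing by a full period. -/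
def IsEmbedded (X : ℝ → E2) : Prop :=
  ∀ p q : ℝ, X p = X q → ∃ k : ℤ, q - p = (k : ℝ)

/-- The set of values of the local total curvature over all pairs of points on the curve. -/
def thetaVals (X : ℝ → E2) : Set ℝ :=
  {x : ℝ | ∃ p q : ℝ, p ≤ q ∧ q ≤ p + 1 ∧ x = theta X p q}

/-- The time-`t` curve of a flow. -/
def curveAt (X : ℝ → ℝ → E2) (t : ℝ) : ℝ → E2 := fun p => X p t

/-- Joint smoothness of a flow of curves. -/
def SmoothFlow (X : ℝ → ℝ → E2) : Prop :=
  ContDiff ℝ (⊤ : ℕ∞) (fun z : ℝ × ℝ => X z.1 z.2)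

/-- The flow equation `∂X/∂t = (h(t) - κ)ν` holding for all times in `S`. -/
def FlowEq (X : ℝ → ℝ → E2) (h : ℝ → ℝ) (S : Set ℝ) : Prop :=
  ∀ p : ℝ, ∀ t ∈ S,
    HasDerivAt (fun s => X p s)
      ((h t - curv (curveAt X t) p) • nvec (curveAt X t) p) t

namespace TPH

/-! ### Linear algebra in the plane -/

lemma inner_E2 (u w : E2) : (inner ℝ u w : ℝ) = u 0 * w 0 + u 1 * w 1 := by
  simp [PiLp.inner_apply, Fin.sum_univ_two]; ring

lemma rot90_apply0 (u : E2) : rot90 u 0 = u 1 := rfl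
lemma rot90_apply1 (u : E2) : rot90 u 1 = -u 0 := rfl

lemma inner_rot90_self (u : E2) : (inner ℝ (rot90 u) u : ℝ) = 0 := by
  simp [inner_E2, rot90_apply0, rot90_apply1]; ring

lemma inner_self_rot90 (u : E2) : (inner ℝ u (rot90 u) : ℝ) = 0 := by
  simp [inner_E2, rot90_apply0, rot90_apply1]; ring

lemma norm_sq_E2 (u : E2) : ‖u‖^2 = u 0 ^ 2 + u 1 ^ 2 := by
  rw [← real_inner_self_eq_norm_sq, inner_E2]; ring

lemma rot90_rot90 (u : E2) : rot90 (rot90 u) = -u := by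
  unfold rot90; ext i; fin_cases i <;> simp

lemma norm_rot90 (u : E2) : ‖rot90 u‖ = ‖u‖ := by
  rw [← Real.sqrt_sq (norm_nonneg (rot90 u)), ← Real.sqrt_sq (norm_nonneg u),
    norm_sq_E2, norm_sq_E2, rot90_apply0, rot90_apply1]
  ring_nf

/-- `rot90` as a continuous linear map. -/
def rot90L : E2 →L[ℝ] E2 :=
  LinearMap.toContinuousLinearMap
  { toFun := rot90
    map_add' := by intro a b; unfold rot90; ext i; fin_cases i <;> simp <;> ring
    map_smul' := by intro c a; unfold rot90; ext i; fin_cases i <;> simp <;> ring }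

lemma rot90L_apply (u : E2) : rot90L u = rot90 u := rfl

/-- Orthonormal decomposition in the basis `(e, rot90 e)` for a unit vector `e`. -/
lemma decomp (e u : E2) (he : ‖e‖ = 1) :
    u = (inner ℝ u e : ℝ) • e + (inner ℝ u (rot90 e) : ℝ) • rot90 e := by
  have h1 : e 0 ^2 + e 1 ^2 = 1 := by rw [← norm_sq_E2, he]; norm_num
  ext i
  fin_cases i
  · show u 0 = _
    simp [inner_E2, rot90_apply0, rot90_apply1, PiLp.add_apply, PiLp.smul_apply, smul_eq_mul]
    linear_combination (-(u 0)) * h1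
  · show u 1 = _
    simp [inner_E2, rot90_apply0, rot90_apply1, PiLp.add_apply, PiLp.smul_apply, smul_eq_mul]
    linear_combination (-(u 1)) * h1

/-! ### Partial derivatives on `ℝ × ℝ` -/

variable {F : Type*} [NormedAddCommGroup F] [NormedSpace ℝ F]

/-- Partial derivative in direction `e`. -/
def pd (e : ℝ × ℝ) (g : ℝ × ℝ → F) (z : ℝ × ℝ) : F := fderiv ℝ g z e

lemma hasDerivAt_slice1 (g : ℝ × ℝ → F) (z : ℝ × ℝ) (hg : DifferentiableAt ℝ g z) :
    HasDerivAt (fun p => g (p, z.2)) (pd (1,0) g z) z.1 := by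
  have h1 : HasDerivAt (fun p : ℝ => (p, z.2)) ((1:ℝ),(0:ℝ)) z.1 :=
    (hasDerivAt_id z.1).prodMk (hasDerivAt_const _ _)
  exact HasFDerivAt.comp_hasDerivAt z.1 (by rw [Prod.mk.eta]; exact hg.hasFDerivAt) h1

lemma hasDerivAt_slice2 (g : ℝ × ℝ → F) (z : ℝ × ℝ) (hg : DifferentiableAt ℝ g z) :
    HasDerivAt (fun t => g (z.1, t)) (pd (0,1) g z) z.2 := by
  have h1 : HasDerivAt (fun t : ℝ => (z.1, t)) ((0:ℝ),(1:ℝ)) z.2 :=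
    (hasDerivAt_const _ _).prodMk (hasDerivAt_id z.2)
  exact HasFDerivAt.comp_hasDerivAt z.2 (by rw [Prod.mk.eta]; exact hg.hasFDerivAt) h1

lemma pd1_eq (g : ℝ × ℝ → F) (z : ℝ × ℝ) (hg : DifferentiableAt ℝ g z) {V : F}
    (hV : HasDerivAt (fun p => g (p, z.2)) V z.1) : pd (1,0) g z = V :=
  hV.unique (hasDerivAt_slice1 g z hg) ▸ rfl

lemma pd2_eq (g : ℝ × ℝ → F) (z : ℝ × ℝ) (hg : DifferentiableAt ℝ g z) {V : F}
    (hV : HasDerivAt (fun t => g (z.1, t)) V z.2) : pd (0,1) g z = V :=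
  hV.unique (hasDerivAt_slice2 g z hg) ▸ rfl

/-- The smoothness exponent we use everywhere. -/
abbrev TOP : WithTop ℕ∞ := ((⊤:ℕ∞) : WithTop ℕ∞)

lemma top_add_one_le : TOP + 1 ≤ TOP := by simp

lemma one_le_TOP : (1 : WithTop ℕ∞) ≤ TOP := by
  rw [show ((1:WithTop ℕ∞)) = ((1:ℕ∞):WithTop ℕ∞) by rfl]
  exact WithTop.coe_le_coe.2 le_top

lemma two_le_TOP : (2 : WithTop ℕ∞) ≤ TOP := by
  rw [show ((2:WithTop ℕ∞)) = ((2:ℕ∞):WithTop ℕ∞) by rfl]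
  exact WithTop.coe_le_coe.2 le_top

/-- Smoothness of a directional partial derivative. -/
lemma contDiffAt_pd {g : ℝ × ℝ → F} {z : ℝ × ℝ} (e : ℝ × ℝ)
    (hg : ContDiffAt ℝ TOP g z) : ContDiffAt ℝ TOP (pd e g) z :=
  (hg.fderiv_right top_add_one_le).clm_apply contDiffAt_const

lemma contDiff_pd {g : ℝ × ℝ → F} (e : ℝ × ℝ)
    (hg : ContDiff ℝ TOP g) : ContDiff ℝ TOP (pd e g) :=
  (hg.fderiv_right top_add_one_le).clm_apply contDiff_const

/-- Schwarz / Clairaut for the two coordinate directions. -/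
lemma pd_comm (g : ℝ × ℝ → F) (z : ℝ × ℝ) (hg : ContDiffAt ℝ TOP g z) :
    pd (1,0) (pd (0,1) g) z = pd (0,1) (pd (1,0) g) z := by
  have hsymm := (hg.of_le two_le_TOP).isSymmSndFDerivAt (by simp)
  have hdf : DifferentiableAt ℝ (fderiv ℝ g) z := by
    have := hg.fderiv_right (m := 1) (by
      rw [show ((1:WithTop ℕ∞)+1) = ((2:ℕ∞):WithTop ℕ∞) by rfl]
      exact WithTop.coe_le_coe.2 le_top)
    exact this.differentiableAt one_ne_zero
  have key : ∀ e : ℝ × ℝ, ∀ w : ℝ × ℝ,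
      pd w (pd e g) z = fderiv ℝ (fderiv ℝ g) z w e := by
    intro e w
    have happ : HasFDerivAt (fun y => fderiv ℝ g y e)
        ((ContinuousLinearMap.apply ℝ F e).comp (fderiv ℝ (fderiv ℝ g) z)) z :=
      (ContinuousLinearMap.apply ℝ F e).hasFDerivAt.comp z hdf.hasFDerivAt
    show fderiv ℝ (fun y => fderiv ℝ g y e) z w = _
    rw [happ.fderiv]; rfl
  rw [key (0,1) (1,0), key (1,0) (0,1), hsymm]

end TPH
namespace TPH

/-! ### Joint geometric quantities of a flow -/

variable (X : ℝ → ℝ → E2)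

def Yj : ℝ × ℝ → E2 := fun z => X z.1 z.2
def Ypj : ℝ × ℝ → E2 := pd (1,0) (Yj X)
def Ytj : ℝ × ℝ → E2 := pd (0,1) (Yj X)
def vj (z : ℝ × ℝ) : ℝ := ‖Ypj X z‖
def tj (z : ℝ × ℝ) : E2 := (vj X z)⁻¹ • Ypj X z
def nj (z : ℝ × ℝ) : E2 := rot90 (tj X z)
def tpj : ℝ × ℝ → E2 := pd (1,0) (tj X)
def kj (z : ℝ × ℝ) : ℝ := -(vj X z)⁻¹ * (inner ℝ (tpj X z) (nj X z) : ℝ)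
def kpj : ℝ × ℝ → ℝ := pd (1,0) (kj X)
def Aj (z : ℝ × ℝ) : ℝ := (vj X z)⁻¹ * kpj X z
def kvj (z : ℝ × ℝ) : ℝ := kj X z * vj X z

variable {X} {z : ℝ × ℝ}

section Smooth
variable (hsm : SmoothFlow X)
include hsm

lemma sY : ContDiff ℝ TOP (Yj X) := hsm

lemma sYp : ContDiff ℝ TOP (Ypj X) := contDiff_pd _ (sY hsm)
lemma sYt : ContDiff ℝ TOP (Ytj X) := contDiff_pd _ (sY hsm)

variable (hz : Ypj X z ≠ 0)
include hz

lemma vj_pos : 0 < vj X z := norm_pos_iff.2 hz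
lemma vj_ne : vj X z ≠ 0 := (vj_pos hsm hz).ne'

lemma sv : ContDiffAt ℝ TOP (vj X) z := ContDiffAt.norm ℝ (sYp hsm).contDiffAt hz
lemma st : ContDiffAt ℝ TOP (tj X) z :=
  ((sv hsm hz).inv (vj_ne hsm hz)).smul (sYp hsm).contDiffAt
lemma sn : ContDiffAt ℝ TOP (nj X) z :=
  (rot90L.contDiff.contDiffAt).comp z (st hsm hz)
lemma stp : ContDiffAt ℝ TOP (tpj X) z := contDiffAt_pd _ (st hsm hz)
lemma sk : ContDiffAt ℝ TOP (kj X) z :=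
  (((sv hsm hz).inv (vj_ne hsm hz)).neg).mul ((stp hsm hz).inner ℝ (sn hsm hz))
lemma skp : ContDiffAt ℝ TOP (kpj X) z := contDiffAt_pd _ (sk hsm hz)
lemma sA : ContDiffAt ℝ TOP (Aj X) z :=
  ((sv hsm hz).inv (vj_ne hsm hz)).mul (skp hsm hz)
lemma skv : ContDiffAt ℝ TOP (kvj X) z := (sk hsm hz).mul (sv hsm hz)

lemma norm_tj : ‖tj X z‖ = 1 := by
  have hv := vj_pos hsm hz
  rw [tj, norm_smul, Real.norm_eq_abs, abs_of_pos (inv_pos.2 hv)]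
  exact inv_mul_cancel₀ (vj_ne hsm hz)

lemma norm_nj : ‖nj X z‖ = 1 := by rw [nj, norm_rot90]; exact norm_tj hsm hz

lemma inner_tj_tj : (inner ℝ (tj X z) (tj X z) : ℝ) = 1 := by
  rw [real_inner_self_eq_norm_sq, norm_tj hsm hz]; norm_num

lemma inner_nj_nj : (inner ℝ (nj X z) (nj X z) : ℝ) = 1 := by
  rw [real_inner_self_eq_norm_sq, norm_nj hsm hz]; norm_num

omit hsm hz in
lemma inner_tj_nj : (inner ℝ (tj X z) (nj X z) : ℝ) = 0 := inner_self_rot90 (tj X z)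

omit hsm hz in
lemma inner_nj_tj : (inner ℝ (nj X z) (tj X z) : ℝ) = 0 := inner_rot90_self (tj X z)

end Smooth

end TPH
namespace TPH
set_option linter.unusedSectionVars false

variable {X : ℝ → ℝ → E2} {z : ℝ × ℝ}

section Bridge
variable (hsm : SmoothFlow X)
include hsm

lemma isOpen_Omega : IsOpen {w : ℝ × ℝ | Ypj X w ≠ 0} :=
  isOpen_compl_singleton.preimage (sYp hsm).continuous

lemma bridge_deriv (t p : ℝ) : deriv (curveAt X t) p = Ypj X (p, t) := by
  have hd : DifferentiableAt ℝ (Yj X) (p, t) :=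
    (sY hsm).differentiable (by simp) (p, t)
  exact (hasDerivAt_slice1 (Yj X) (p, t) hd).deriv

lemma bridge_len (t p : ℝ) : lenElem (curveAt X t) p = vj X (p, t) := by
  rw [lenElem, bridge_deriv hsm]; rfl

lemma bridge_tvec (t : ℝ) : tvec (curveAt X t) = fun p => tj X (p, t) := by
  funext p; rw [tvec, bridge_len hsm, bridge_deriv hsm]; rfl

lemma bridge_nvec (t p : ℝ) : nvec (curveAt X t) p = nj X (p, t) := by
  rw [nvec, bridge_tvec hsm]; rfl

variable (hz : Ypj X z ≠ 0)
include hz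

lemma bridge_dtvec : deriv (tvec (curveAt X z.2)) z.1 = tpj X z := by
  rw [bridge_tvec hsm]
  have := hasDerivAt_slice1 (tj X) z ((st hsm hz).differentiableAt (by simp))
  exact this.deriv

lemma bridge_curv : curv (curveAt X z.2) z.1 = kj X z := by
  have h1 : lenElem (curveAt X z.2) z.1 = vj X z := bridge_len hsm z.2 z.1
  have h2 : nvec (curveAt X z.2) z.1 = nj X z := bridge_nvec hsm z.2 z.1
  rw [curv, h1, h2, bridge_dtvec hsm hz, real_inner_smul_left, kj]
  ring

end Bridge

end TPH
namespace TPH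
set_option linter.unusedSectionVars false

variable {X : ℝ → ℝ → E2} {z : ℝ × ℝ}

section Geometry
variable (hsm : SmoothFlow X) (hz : Ypj X z ≠ 0)
include hsm hz

lemma slice1_mem_nhds : {p : ℝ | Ypj X (p, z.2) ≠ 0} ∈ nhds z.1 := by
  have hΩ : {w : ℝ × ℝ | Ypj X w ≠ 0} ∈ nhds z := (isOpen_Omega hsm).mem_nhds hz
  have hc : ContinuousAt (fun p : ℝ => (p, z.2)) z.1 := by fun_prop
  exact hc.preimage_mem_nhds (by rwa [Prod.mk.eta])

lemma inner_tpj_tj : (inner ℝ (tpj X z) (tj X z) : ℝ) = 0 := by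
  have hdt := (st hsm hz).differentiableAt (by simp)
  have ht := hasDerivAt_slice1 (tj X) z hdt
  have hq := ht.inner ℝ ht
  have hev : (fun p => (inner ℝ (tj X (p, z.2)) (tj X (p, z.2)) : ℝ)) =ᶠ[nhds z.1]
      fun _ => 1 := by
    filter_upwards [slice1_mem_nhds hsm hz] with p hp
    exact inner_tj_tj hsm hp
  have h0 := (hq.congr_of_eventuallyEq hev.symm).unique (hasDerivAt_const z.1 1)
  rw [Prod.mk.eta] at h0
  rw [show pd (1,0) (tj X) z = tpj X z from rfl] at h0
  have hcomm := real_inner_comm (tj X z) (tpj X z)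
  linarith [h0, hcomm]

lemma inner_tpj_nj : (inner ℝ (tpj X z) (nj X z) : ℝ) = -(kvj X z) := by
  have hv := vj_ne hsm hz
  rw [kvj, kj]; field_simp

lemma tpj_eq : tpj X z = (-(kvj X z)) • nj X z := by
  have hd := decomp (tj X z) (tpj X z) (norm_tj hsm hz)
  rw [inner_tpj_tj hsm hz, show rot90 (tj X z) = nj X z from rfl,
    inner_tpj_nj hsm hz, zero_smul, zero_add] at hd
  exact hd

lemma pd1_nj : pd (1,0) (nj X) z = kvj X z • tj X z := by
  have hdt := (st hsm hz).differentiableAt (by simp)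
  have ht := hasDerivAt_slice1 (tj X) z hdt
  have hcomp := rot90L.hasFDerivAt.comp_hasDerivAt z.1 ht
  have h := pd1_eq (nj X) z ((sn hsm hz).differentiableAt (by simp)) hcomp
  rw [h, show pd (1,0) (tj X) z = tpj X z from rfl, tpj_eq hsm hz, _root_.map_smul, rot90L_apply,
    show rot90 (nj X z) = -tj X z from by rw [nj, rot90_rot90],
    smul_neg, neg_smul, neg_neg]

lemma kvj_eq : kvj X z = -(inner ℝ (tpj X z) (nj X z) : ℝ) := by
  rw [inner_tpj_nj hsm hz, neg_neg]

lemma Ypj_eq : Ypj X z = vj X z • tj X z := by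
  rw [tj, smul_smul, mul_inv_cancel₀ (vj_ne hsm hz), one_smul]

end Geometry

section Bridge2
variable (hsm : SmoothFlow X) (hall : ∀ p' : ℝ, Ypj X (p', z.2) ≠ 0)
include hsm hall

lemma bridge_dcurv : deriv (curv (curveAt X z.2)) z.1 = kpj X z := by
  have hfe : curv (curveAt X z.2) = fun p => kj X (p, z.2) := by
    funext p
    exact bridge_curv (z := (p, z.2)) hsm (hall p)
  rw [hfe]
  have hz' : Ypj X z ≠ 0 := by have := hall z.1; rwa [Prod.mk.eta] at this
  exact (hasDerivAt_slice1 (kj X) z ((sk hsm hz').differentiableAt (by simp))).deriv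

end Bridge2

end TPH
namespace TPH
set_option linter.unusedSectionVars false

variable {X : ℝ → ℝ → E2} {h : ℝ → ℝ} {T : ℝ} {z : ℝ × ℝ}

section Time
variable (hsm : SmoothFlow X)
  (hne : ∀ w : ℝ × ℝ, w.2 ∈ Set.Ioo 0 T → Ypj X w ≠ 0)
  (hfl : ∀ w : ℝ × ℝ, w.2 ∈ Set.Ioo 0 T → Ytj X w = (h w.2 - kj X w) • nj X w)
  (hIoo : z.2 ∈ Set.Ioo 0 T)
include hsm hne hfl hIoo

omit hfl in
lemma hz' : Ypj X z ≠ 0 := hne z hIoo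

omit hfl in
lemma slice2_mem_nhds : {t : ℝ | Ypj X (z.1, t) ≠ 0} ∈ nhds z.2 := by
  have hΩ : {w : ℝ × ℝ | Ypj X w ≠ 0} ∈ nhds z :=
    (isOpen_Omega hsm).mem_nhds (hz' hsm hne hIoo)
  have hc : ContinuousAt (fun t : ℝ => (z.1, t)) z.2 := by fun_prop
  exact hc.preimage_mem_nhds (by rwa [Prod.mk.eta])

lemma pd1_Ytj : pd (1,0) (Ytj X) z
    = ((h z.2 - kj X z) * kvj X z) • tj X z + (-(kpj X z)) • nj X z := by
  have hz := hz' hsm hne hIoo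
  have hfe : (fun p => Ytj X (p, z.2)) =
      fun p => (h z.2 - kj X (p, z.2)) • nj X (p, z.2) :=
    funext fun p => hfl (p, z.2) hIoo
  have hk := hasDerivAt_slice1 (kj X) z ((sk hsm hz).differentiableAt (by simp))
  have hn := hasDerivAt_slice1 (nj X) z ((sn hsm hz).differentiableAt (by simp))
  have hF := hk.const_sub (h z.2)
  have hsmul := hF.smul hn
  rw [Prod.mk.eta] at hsmul
  have hd : DifferentiableAt ℝ (Ytj X) z := (sYt hsm).differentiable (by simp) z
  have := pd1_eq (Ytj X) z hd (by rw [hfe]; exact hsmul)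
  rw [this, pd1_nj hsm hz, smul_smul,
    show pd (1,0) (kj X) z = kpj X z from rfl]

lemma pd2_Ypj : pd (0,1) (Ypj X) z
    = ((h z.2 - kj X z) * kvj X z) • tj X z + (-(kpj X z)) • nj X z := by
  rw [show pd (0,1) (Ypj X) z = pd (1,0) (Ytj X) z from
    (pd_comm (Yj X) z (sY hsm).contDiffAt).symm]
  exact pd1_Ytj hsm hne hfl hIoo

lemma pd2_vj : pd (0,1) (vj X) z = (h z.2 - kj X z) * kvj X z := by
  have hz := hz' hsm hne hIoo
  have hv := vj_ne hsm hz
  have hu := hasDerivAt_slice2 (Ypj X) z ((sYp hsm).differentiable (by simp) z)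
  have hq := hu.inner ℝ hu
  have hq_ne : (inner ℝ (Ypj X z) (Ypj X z) : ℝ) ≠ 0 := by
    rw [real_inner_self_eq_norm_sq]
    exact pow_ne_zero 2 hv
  rw [Prod.mk.eta] at hq
  have hs := hq.sqrt hq_ne
  have hfe : (fun t => Real.sqrt (inner ℝ (Ypj X (z.1, t)) (Ypj X (z.1, t)) : ℝ))
      = fun t => vj X (z.1, t) := by
    funext t
    rw [real_inner_self_eq_norm_mul_norm, Real.sqrt_mul_self (norm_nonneg _)]
    rfl
  rw [hfe] at hs
  have := pd2_eq (vj X) z ((sv hsm hz).differentiableAt (by simp)) hs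
  rw [this, pd2_Ypj hsm hne hfl hIoo]
  have hsq : Real.sqrt (inner ℝ (Ypj X z) (Ypj X z) : ℝ) = vj X z := by
    rw [real_inner_self_eq_norm_mul_norm, Real.sqrt_mul_self (norm_nonneg _)]
    rfl
  rw [hsq]
  have hYe := Ypj_eq hsm hz
  rw [hYe, real_inner_smul_left, real_inner_smul_right, inner_add_right, inner_add_left,
    real_inner_smul_right, real_inner_smul_right, real_inner_smul_left, real_inner_smul_left,
    inner_tj_tj hsm hz, inner_tj_nj, inner_nj_tj]
  field_simp
  ring

lemma pd2_tj : pd (0,1) (tj X) z = (-(Aj X z)) • nj X z := by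
  have hz := hz' hsm hne hIoo
  have hv := vj_ne hsm hz
  have hu := hasDerivAt_slice2 (Ypj X) z ((sYp hsm).differentiable (by simp) z)
  have hv_sl := hasDerivAt_slice2 (vj X) z ((sv hsm hz).differentiableAt (by simp))
  have hvz : vj X (z.1, z.2) ≠ 0 := by rwa [Prod.mk.eta]
  have hinv := hv_sl.inv hvz
  have hsmul := hinv.smul hu
  rw [Prod.mk.eta] at hsmul
  have := pd2_eq (tj X) z ((st hsm hz).differentiableAt (by simp)) hsmul
  rw [this, pd2_vj hsm hne hfl hIoo, pd2_Ypj hsm hne hfl hIoo, Ypj_eq hsm hz, Aj]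
  simp only [Pi.inv_apply] at this ⊢
  match_scalars <;> field_simp <;> ring

lemma pd2_nj : pd (0,1) (nj X) z = Aj X z • tj X z := by
  have hz := hz' hsm hne hIoo
  have ht := hasDerivAt_slice2 (tj X) z ((st hsm hz).differentiableAt (by simp))
  have hcomp := rot90L.hasFDerivAt.comp_hasDerivAt z.2 ht
  have h := pd2_eq (nj X) z ((sn hsm hz).differentiableAt (by simp)) hcomp
  rw [h, show pd (0,1) (tj X) z = (-(Aj X z)) • nj X z from pd2_tj hsm hne hfl hIoo,
    _root_.map_smul, rot90L_apply,
    show rot90 (nj X z) = -tj X z from by rw [nj, rot90_rot90],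
    smul_neg, neg_smul, neg_neg]

lemma pd2_kvj : pd (0,1) (kvj X) z = pd (1,0) (Aj X) z := by
  have hz := hz' hsm hne hIoo
  -- pd2 of tpj via Schwarz
  have hswz : pd (0,1) (tpj X) z = pd (1,0) (pd (0,1) (tj X)) z :=
    (pd_comm (tj X) z (st hsm hz)).symm
  -- evaluate pd1 of pd2 tj using the evolution equation for tj on the strip
  have hval : pd (1,0) (pd (0,1) (tj X)) z
      = (-(Aj X z) * kvj X z) • tj X z + (-(pd (1,0) (Aj X) z)) • nj X z := by
    have hfe : (fun p => pd (0,1) (tj X) (p, z.2))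
        = fun p => (-(Aj X (p, z.2))) • nj X (p, z.2) := by
      funext p
      exact pd2_tj hsm hne hfl (z := (p, z.2)) hIoo
    have hA_sl := hasDerivAt_slice1 (Aj X) z ((sA hsm hz).differentiableAt (by simp))
    have hn_sl := hasDerivAt_slice1 (nj X) z ((sn hsm hz).differentiableAt (by simp))
    have hsmul := hA_sl.neg.smul hn_sl
    rw [Prod.mk.eta] at hsmul
    have hdiff : DifferentiableAt ℝ (pd (0,1) (tj X)) z :=
      (contDiffAt_pd (0,1) (st hsm hz)).differentiableAt (by simp)
    have := pd1_eq (pd (0,1) (tj X)) z hdiff (by rw [hfe]; exact hsmul)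
    rw [this, pd1_nj hsm hz, smul_smul]
    rfl
  -- kvj = -⟪tpj, nj⟫ near z (in the t-direction)
  have htp_sl := hasDerivAt_slice2 (tpj X) z ((stp hsm hz).differentiableAt (by simp))
  have hn_sl := hasDerivAt_slice2 (nj X) z ((sn hsm hz).differentiableAt (by simp))
  have hinner := (htp_sl.inner ℝ hn_sl).neg
  have hev : (fun t => -(inner ℝ (tpj X (z.1, t)) (nj X (z.1, t)) : ℝ)) =ᶠ[nhds z.2]
      fun t => kvj X (z.1, t) := by
    filter_upwards [slice2_mem_nhds hsm hne hIoo] with t htm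
    exact (kvj_eq hsm htm).symm
  have hkv := pd2_eq (kvj X) z ((skv hsm hz).differentiableAt (by simp))
    (hinner.congr_of_eventuallyEq hev.symm)
  rw [Prod.mk.eta] at hkv
  rw [hkv, show pd (0,1) (tpj X) z = _ from hswz.trans hval,
    pd2_nj hsm hne hfl hIoo]
  rw [inner_add_left, real_inner_smul_left, real_inner_smul_left, real_inner_smul_right,
    inner_tj_nj, inner_nj_nj hsm hz, inner_tpj_tj hsm hz]
  ring

end Time

end TPH
open TPH

/-- **Theorem (Dittberner, Thm. 3.4, heat equation part).**
Along the flow `∂X/∂t = (h(t) - κ)ν` through embedded closed curves, the local total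
curvature `θ(p,q,t) = ∫_p^q κ ds_t` satisfies
`∂θ/∂t = ∂κ/∂s(q,t) - ∂κ/∂s(p,t)` for all `p ≠ q` and `t ∈ (0,T)`,
where `∂/∂s = v⁻¹ ∂/∂p` is the arc-length derivative. -/
theorem theta_two_point_heat_equation
    (T : ℝ) (hT : 0 < T) (X : ℝ → ℝ → E2) (h : ℝ → ℝ)
    (hsm : SmoothFlow X)
    (hper : ∀ t, Function.Periodic (curveAt X t) 1)
    (hreg : ∀ t ∈ Set.Ioo 0 T, ∀ p, deriv (curveAt X t) p ≠ 0)
    (hemb : ∀ t ∈ Set.Ioo 0 T, IsEmbedded (curveAt X t))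
    (hh : ∀ t ∈ Set.Ioo 0 T, 0 ≤ h t)
    (hhsm : ContDiffOn ℝ (⊤ : ℕ∞) h (Set.Ioo 0 T))
    (hflow : FlowEq X h (Set.Ioo 0 T)) :
    ∀ p q : ℝ, p ≠ q → ∀ t ∈ Set.Ioo 0 T,
      HasDerivAt (fun s : ℝ => theta (curveAt X s) p q)
        ((lenElem (curveAt X t) q)⁻¹ * deriv (curv (curveAt X t)) q
          - (lenElem (curveAt X t) p)⁻¹ * deriv (curv (curveAt X t)) p) t := by
  intro p q _hpq t htI
  -- joint regularity
  have hne : ∀ w : ℝ × ℝ, w.2 ∈ Set.Ioo 0 T → Ypj X w ≠ 0 := by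
    intro w hw
    have hr := hreg w.2 hw w.1
    rwa [bridge_deriv hsm, Prod.mk.eta] at hr
  -- joint flow equation
  have hfl : ∀ w : ℝ × ℝ, w.2 ∈ Set.Ioo 0 T → Ytj X w = (h w.2 - kj X w) • nj X w := by
    intro w hw
    have hfd := hflow w.1 w.2 hw
    have hd : DifferentiableAt ℝ (Yj X) w := (sY hsm).differentiable (by simp) w
    have heq := pd2_eq (Yj X) w hd hfd
    rw [show Ytj X w = pd (0,1) (Yj X) w from rfl, heq,
      bridge_curv hsm (hne w hw), bridge_nvec hsm, Prod.mk.eta]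
  -- theta as an integral of the joint integrand
  have htheta : ∀ s ∈ Set.Ioo 0 T,
      theta (curveAt X s) p q = ∫ r in p..q, kvj X (r, s) := by
    intro s hs
    rw [theta]
    congr 1
    funext r
    rw [bridge_curv hsm (hne (r, s) hs), bridge_len hsm, kvj]
  -- continuity helpers
  have hcont_kv : ∀ s ∈ Set.Ioo 0 T, Continuous fun r => kvj X (r, s) := by
    intro s hs
    refine continuous_iff_continuousAt.2 fun r => ?_
    exact ContinuousAt.comp (f := fun r : ℝ => (r, s))
      ((skv hsm (hne (r, s) hs)).continuousAt)
      ((continuous_id.prodMk continuous_const).continuousAt)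
  have hcont_kv2 : ∀ s ∈ Set.Ioo 0 T, Continuous fun r => pd (0,1) (kvj X) (r, s) := by
    intro s hs
    refine continuous_iff_continuousAt.2 fun r => ?_
    exact ContinuousAt.comp (f := fun r : ℝ => (r, s))
      ((contDiffAt_pd (0,1) (skv hsm (hne (r, s) hs))).continuousAt)
      ((continuous_id.prodMk continuous_const).continuousAt)
  have hcont_A : Continuous fun r => pd (1,0) (Aj X) (r, t) := by
    refine continuous_iff_continuousAt.2 fun r => ?_
    exact ContinuousAt.comp (f := fun r : ℝ => (r, t))
      ((contDiffAt_pd (1,0) (sA hsm (hne (r, t) htI))).continuousAt)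
      ((continuous_id.prodMk continuous_const).continuousAt)
  -- a closed ball of times inside (0,T)
  obtain ⟨ε, εpos, hball⟩ : ∃ ε > 0, Metric.closedBall t ε ⊆ Set.Ioo 0 T :=
    Metric.nhds_basis_closedBall.mem_iff.1 (isOpen_Ioo.mem_nhds htI)
  -- uniform bound for the t-derivative of the integrand
  have hK : IsCompact (Set.uIcc p q ×ˢ Metric.closedBall t ε) :=
    isCompact_uIcc.prod (isCompact_closedBall t ε)
  have hKcont : ContinuousOn (pd (0,1) (kvj X)) (Set.uIcc p q ×ˢ Metric.closedBall t ε) := by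
    intro w hw
    exact ((contDiffAt_pd (0,1) (skv hsm (hne w (hball hw.2)))).continuousAt).continuousWithinAt
  obtain ⟨C, hC⟩ := hK.exists_bound_of_continuousOn hKcont
  -- differentiation under the integral sign
  have Hmain := (intervalIntegral.hasDerivAt_integral_of_dominated_loc_of_deriv_le
    (F := fun x r => kvj X (r, x)) (F' := fun x r => pd (0,1) (kvj X) (r, x))
    (x₀ := t) (a := p) (b := q) (μ := MeasureTheory.volume) (bound := fun _ => C)
    (Metric.ball_mem_nhds t εpos)
    (by
      filter_upwards [isOpen_Ioo.mem_nhds htI] with s hs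
      exact ((hcont_kv s hs).aestronglyMeasurable))
    ((hcont_kv t htI).intervalIntegrable p q)
    ((hcont_kv2 t htI).aestronglyMeasurable)
    (by
      refine Filter.Eventually.of_forall fun r hr x hx => ?_
      exact hC (r, x) ⟨uIoc_subset_uIcc hr, Metric.ball_subset_closedBall hx⟩)
    (intervalIntegrable_const)
    (by
      refine Filter.Eventually.of_forall fun r hr x hx => ?_
      have hxI : x ∈ Set.Ioo 0 T := hball (Metric.ball_subset_closedBall hx)
      exact hasDerivAt_slice2 (kvj X) (r, x)
        ((skv hsm (hne (r, x) hxI)).differentiableAt (by simp)))).2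
  -- identify the derivative with the FTC expression
  have hid : (∫ r in p..q, pd (0,1) (kvj X) (r, t))
      = ∫ r in p..q, pd (1,0) (Aj X) (r, t) := by
    congr 1
    funext r
    exact pd2_kvj hsm hne hfl (z := (r, t)) htI
  have hFTC : (∫ r in p..q, pd (1,0) (Aj X) (r, t)) = Aj X (q, t) - Aj X (p, t) := by
    refine intervalIntegral.integral_eq_sub_of_hasDerivAt (f := fun r => Aj X (r, t)) (fun r _ => ?_)
      (hcont_A.intervalIntegrable p q)
    exact hasDerivAt_slice1 (Aj X) (r, t) ((sA hsm (hne (r, t) htI)).differentiableAt (by simp))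
  rw [hid, hFTC] at Hmain
  -- transfer from the integral function back to `theta`
  have hEv : (fun s : ℝ => theta (curveAt X s) p q)
      =ᶠ[nhds t] fun s : ℝ => ∫ r in p..q, kvj X (r, s) := by
    filter_upwards [isOpen_Ioo.mem_nhds htI] with s hs
    exact htheta s hs
  have Hfin := Hmain.congr_of_eventuallyEq hEv
  -- identify the claimed value
  have hall : ∀ p' : ℝ, Ypj X (p', t) ≠ 0 := fun p' => hne (p', t) htI
  have hq' : (lenElem (curveAt X t) q)⁻¹ * deriv (curv (curveAt X t)) q = Aj X (q, t) := by
    rw [bridge_len hsm, bridge_dcurv hsm (z := (q, t)) hall, Aj]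
  have hp' : (lenElem (curveAt X t) p)⁻¹ * deriv (curv (curveAt X t)) p = Aj X (p, t) := by
    rw [bridge_len hsm, bridge_dcurv hsm (z := (p, t)) hall, Aj]
  rw [hq', hp']
  exact Hfin
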